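/- There exists ν₊ > 0 such that for every ν ∈ (0, ν₊] there is a time T > 0 with the property that every solution z of the ODE z' = F_ν(z) defined on [0, ∞) with z(0) ∈ B_{ν₊} satisfies z(t) ∈ B_ν for all t > T. -/

import Mathlib

open Set

/-- The planar vector field `F_ν(x, y) = (x(ν − x²) + x³y + xy², −y + x²y + x⁴)`. -/
noncomputable def F (ν : ℝ) (p : ℝ × ℝ) : ℝ × ℝ :=
  (p.1 * (ν - p.1 ^ 2) + p.1 ^ 3 * p.2 + p.1 * p.2 ^ 2,
   -p.2 + p.1 ^ 2 * p.2 + p.1 ^ 4)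

/-- The box `B_θ = [−√(2θ), √(2θ)] × [−θ, θ]`. -/
noncomputable def B (θ : ℝ) : Set (ℝ × ℝ) :=
  Icc (-Real.sqrt (2 * θ)) (Real.sqrt (2 * θ)) ×ˢ Icc (-θ) θ

open Filter

/-- Negative derivative: strictly smaller values just to the right. -/
lemma eventually_right_lt {g : ℝ → ℝ} {s d : ℝ} (hg : HasDerivAt g d s) (hd : d < 0) :
    ∀ᶠ t in nhdsWithin s (Ioi s), g t < g s := by
  have h1 : Tendsto (slope g s) (nhdsWithin s {s}ᶜ) (nhds d) :=
    hasDerivAt_iff_tendsto_slope.mp hg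
  have h2 : ∀ᶠ t in nhdsWithin s {s}ᶜ, slope g s t < 0 :=
    h1.eventually_lt_const hd
  have h3 : ∀ᶠ t in nhdsWithin s (Ioi s), slope g s t < 0 :=
    h2.filter_mono (nhdsWithin_mono s (fun x hx => ne_of_gt hx))
  filter_upwards [h3, self_mem_nhdsWithin] with t ht hts
  have hts' : (0:ℝ) < t - s := sub_pos.mpr hts
  have hslope : slope g s t = (g t - g s) / (t - s) := slope_def_field g s t
  rw [hslope] at ht
  rcases div_neg_iff.mp ht with ⟨h', h''⟩ | ⟨h', _⟩
  · linarith
  · linarith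

/-- Barrier / funnel lemma for finitely many constraints with a moving level. -/
lemma barrier {n : ℕ} (f f' : Fin n → ℝ → ℝ) (θ θ' : ℝ → ℝ) {a b : ℝ}
    (hf : ∀ i, ∀ t ∈ Icc a b, HasDerivAt (f i) (f' i t) t)
    (hθ : ∀ t ∈ Icc a b, HasDerivAt θ (θ' t) t)
    (h0 : ∀ i, f i a ≤ θ a)
    (H : ∀ t ∈ Icc a b, (∀ j, f j t ≤ θ t) → ∀ i, f i t = θ t → f' i t < θ' t) :
    ∀ t ∈ Icc a b, ∀ i, f i t ≤ θ t := by
  by_contra hcon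
  push_neg at hcon
  obtain ⟨t₀, ht₀, i₀, hi₀⟩ := hcon
  set S : Set ℝ := {t ∈ Icc a t₀ | ∀ i, f i t ≤ θ t} with hS
  have hsub : ∀ t ∈ S, t ∈ Icc a b := fun t ht => ⟨ht.1.1, ht.1.2.trans ht₀.2⟩
  have hcont : ∀ i, ContinuousOn (fun t => f i t - θ t) (Icc a t₀) := by
    intro i t ht
    have ht' : t ∈ Icc a b := ⟨ht.1, ht.2.trans ht₀.2⟩
    exact (((hf i t ht').continuousAt.sub (hθ t ht').continuousAt)).continuousWithinAt
  have hScl : IsClosed S := by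
    have hSeq : S = Icc a t₀ ∩ ⋂ i, (Icc a t₀ ∩ (fun t => f i t - θ t) ⁻¹' Iic 0) := by
      ext t
      simp only [hS, mem_inter_iff, mem_iInter, mem_preimage, mem_Iic, mem_setOf_eq, sub_nonpos]
      exact ⟨fun ⟨h1, h2⟩ => ⟨h1, fun i => ⟨h1, h2 i⟩⟩, fun ⟨h1, h2⟩ => ⟨h1, fun i => (h2 i).2⟩⟩
    rw [hSeq]
    exact isClosed_Icc.inter (isClosed_iInter fun i =>
      (hcont i).preimage_isClosed_of_isClosed isClosed_Icc isClosed_Iic)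
  have hne : S.Nonempty := ⟨a, ⟨⟨le_refl a, ht₀.1⟩, h0⟩⟩
  have hbdd : BddAbove S := (bddAbove_Icc).mono (fun t ht => ht.1)
  set s := sSup S with hs
  have hsS : s ∈ S := hScl.csSup_mem hne hbdd
  have hsb : s ∈ Icc a b := hsub s hsS
  have hst₀ : s < t₀ := by
    rcases lt_or_eq_of_le hsS.1.2 with h | h
    · exact h
    · exact absurd (hsS.2 i₀) (by rw [h]; exact not_le.mpr hi₀)
  have hev : ∀ i, ∀ᶠ t in nhdsWithin s (Ioi s), f i t < θ t := by
    intro i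
    rcases lt_or_eq_of_le (hsS.2 i) with hlt | heq
    · have hc : ContinuousAt (fun t => f i t - θ t) s :=
        ((hf i s hsb).continuousAt.sub (hθ s hsb).continuousAt)
      have : ∀ᶠ t in nhds s, f i t - θ t < 0 :=
        hc.eventually_lt_const (by linarith : f i s - θ s < 0)
      exact (this.filter_mono nhdsWithin_le_nhds).mono (fun t ht => by linarith)
    · have hd : f' i s - θ' s < 0 :=
        sub_neg.mpr (H s hsb hsS.2 i heq)
      have hder : HasDerivAt (fun t => f i t - θ t) (f' i s - θ' s) s :=
        (hf i s hsb).sub (hθ s hsb)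
      have := eventually_right_lt hder hd
      refine this.mono (fun t ht => ?_)
      rw [heq] at ht
      linarith
  have hev' : ∀ᶠ t in nhdsWithin s (Ioi s), (∀ i, f i t < θ t) ∧ t < t₀ := by
    refine (eventually_all.mpr hev).and ?_
    exact eventually_nhdsWithin_of_eventually_nhds (eventually_lt_nhds hst₀)
  have hNB : (nhdsWithin s (Ioi s)).NeBot := nhdsGT_neBot s
  obtain ⟨t, ht, hts⟩ := (hev'.and self_mem_nhdsWithin).exists
  have htS : t ∈ S := ⟨⟨hsS.1.1.trans (le_of_lt hts), le_of_lt ht.2⟩, fun i => le_of_lt (ht.1 i)⟩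
  exact absurd (le_csSup hbdd htS) (not_le.mpr hts)

lemma mem_B_iff {θ : ℝ} (hθ : 0 ≤ θ) {p : ℝ × ℝ} :
    p ∈ B θ ↔ p.1 ^ 2 / 2 ≤ θ ∧ p.2 ≤ θ ∧ -p.2 ≤ θ := by
  have h2θ : (0:ℝ) ≤ 2 * θ := by linarith
  have habs : |p.1| ≤ Real.sqrt (2*θ) ↔ p.1 ^ 2 ≤ 2*θ := by
    rw [← Real.sqrt_sq_eq_abs]
    constructor
    · intro h'
      nlinarith [Real.sq_sqrt h2θ, Real.sqrt_nonneg (2*θ), Real.sqrt_nonneg (p.1^2),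
        Real.sq_sqrt (sq_nonneg p.1)]
    · exact fun h' => Real.sqrt_le_sqrt h'
  rw [B, mem_prod, mem_Icc, mem_Icc, ← abs_le, habs]
  constructor
  · rintro ⟨h1, h2, h3⟩; exact ⟨by linarith, h3, by linarith⟩
  · rintro ⟨h1, h2, h3⟩; exact ⟨by linarith, by linarith, h2⟩

lemma deriv_u {ν : ℝ} {z : ℝ → ℝ × ℝ} {t : ℝ} (hz : HasDerivAt z (F ν (z t)) t) :
    HasDerivAt (fun τ => (z τ).1 ^ 2 / 2) ((z t).1 * (F ν (z t)).1) t := by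
  have hx : HasDerivAt (fun τ => (z τ).1) ((F ν (z t)).1) t := hz.fst
  have := (hx.fun_pow 2).div_const 2
  refine this.congr_deriv ?_
  push_cast
  ring

lemma deriv_y {ν : ℝ} {z : ℝ → ℝ × ℝ} {t : ℝ} (hz : HasDerivAt z (F ν (z t)) t) :
    HasDerivAt (fun τ => (z τ).2) ((F ν (z t)).2) t := hz.snd

lemma deriv_ny {ν : ℝ} {z : ℝ → ℝ × ℝ} {t : ℝ} (hz : HasDerivAt z (F ν (z t)) t) :
    HasDerivAt (fun τ => -(z τ).2) (-(F ν (z t)).2) t := by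
  have hy : HasDerivAt (fun τ => (z τ).2) ((F ν (z t)).2) t := hz.snd
  exact hy.neg

/-- Boundary inequality, x-direction. -/
lemma ineqA {ν θ x y : ℝ} (hν : 0 < ν) (h1 : ν ≤ θ) (h2 : θ ≤ 1/12)
    (hx : x^2/2 = θ) (hy : y ≤ θ) (hny : -y ≤ θ) :
    x * (x * (ν - x ^ 2) + x ^ 3 * y + x * y ^ 2) < -(ν^2/4) := by
  have hθ : 0 < θ := lt_of_lt_of_le hν h1
  have hx2 : x^2 = 2*θ := by linarith
  have key : x * (x * (ν - x ^ 2) + x ^ 3 * y + x * y ^ 2)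
      = 2*θ*(ν - 2*θ) + 4*θ^2*y + 2*θ*y^2 := by
    linear_combination (ν + y^2 - (x^2+2*θ) + y*(x^2+2*θ)) * hx2
  rw [key]
  have h3 : 0 ≤ θ^2*(θ - y) := mul_nonneg (sq_nonneg θ) (by linarith)
  have h4 : 0 ≤ θ*((θ - y)*(θ + y)) :=
    mul_nonneg hθ.le (mul_nonneg (by linarith) (by linarith))
  have h5 : 0 ≤ θ*(θ - ν) := mul_nonneg hθ.le (by linarith)
  have h6 : 0 ≤ (θ - ν)*(θ + ν) := mul_nonneg (by linarith) (by linarith)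
  have h7 : 0 ≤ θ^2*(1 - 12*θ) := mul_nonneg (sq_nonneg θ) (by linarith)
  nlinarith [mul_pos hν hν]

/-- Boundary inequality, upper y-direction. -/
lemma ineqB {ν θ x y : ℝ} (hν : 0 < ν) (hν' : ν ≤ 1/12) (h1 : ν ≤ θ) (h2 : θ ≤ 1/12)
    (hx : x^2/2 ≤ θ) (hy : y = θ) :
    -y + x^2*y + x^4 < -(ν^2/4) := by
  nlinarith [sq_nonneg x]

/-- Boundary inequality, lower y-direction. -/
lemma ineqC {ν θ x y : ℝ} (hν : 0 < ν) (hν' : ν ≤ 1/12) (h1 : ν ≤ θ) (h2 : θ ≤ 1/12)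
    (hx : x^2/2 ≤ θ) (hny : -y = θ) :
    -(-y + x^2*y + x^4) < -(ν^2/4) := by
  nlinarith [sq_nonneg x, sq_nonneg (x^2)]

/-- There exists `ν₊ > 0` such that for every `ν ∈ (0, ν₊]` there is `T > 0` such that
every solution starting in `B_{ν₊}` lies in `B_ν` for all `t > T`. -/
theorem stmt1 :
    ∃ νp : ℝ, 0 < νp ∧ ∀ ν ∈ Ioc (0 : ℝ) νp, ∃ T : ℝ, 0 < T ∧ ∀ z : ℝ → ℝ × ℝ,
      (∀ t ∈ Ici (0 : ℝ), HasDerivAt z (F ν (z t)) t) →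
      z 0 ∈ B νp → ∀ t > T, z t ∈ B ν := by
  refine ⟨1/12, by norm_num, ?_⟩
  rintro ν ⟨hν0, hν⟩
  set ε : ℝ := ν^2/4 with hε
  have hεpos : 0 < ε := by positivity
  set T₁ : ℝ := (1/12 - ν)/ε with hT₁def
  have hT₁0 : 0 ≤ T₁ := div_nonneg (by linarith) hεpos.le
  have hεT₁ : ε * T₁ = 1/12 - ν := by
    rw [hT₁def]
    field_simp
  refine ⟨T₁ + 1, by linarith, ?_⟩
  intro z hz hz0 t ht
  have htT₁ : T₁ ≤ t := by linarith
  set fv : Fin 3 → ℝ → ℝ :=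
    ![fun τ => (z τ).1^2/2, fun τ => (z τ).2, fun τ => -(z τ).2] with hfvdef
  set fv' : Fin 3 → ℝ → ℝ :=
    ![fun τ => (z τ).1 * (F ν (z τ)).1, fun τ => (F ν (z τ)).2,
      fun τ => -(F ν (z τ)).2] with hfv'def
  have hder : ∀ i, ∀ s ∈ Ici (0:ℝ), HasDerivAt (fv i) (fv' i s) s := by
    intro i s hs
    fin_cases i
    · simpa [hfvdef, hfv'def] using deriv_u (hz s hs)
    · simpa [hfvdef, hfv'def] using deriv_y (hz s hs)
    · simpa [hfvdef, hfv'def] using deriv_ny (hz s hs)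
  -- hypotheses H: boundary derivative sign, valid whenever ν ≤ level ≤ 1/12
  have hH : ∀ (s θs : ℝ), ν ≤ θs → θs ≤ 1/12 →
      (∀ j, fv j s ≤ θs) → ∀ i, fv i s = θs → fv' i s < -ε := by
    intro s θs hθ1 hθ2 hall i heq
    have c0 : (z s).1^2/2 ≤ θs := by simpa [hfvdef] using hall 0
    have c1 : (z s).2 ≤ θs := by simpa [hfvdef] using hall 1
    have c2 : -(z s).2 ≤ θs := by simpa [hfvdef] using hall 2
    fin_cases i
    · have heq' : (z s).1^2/2 = θs := by simpa [hfvdef] using heq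
      have := ineqA hν0 hθ1 hθ2 heq' c1 c2
      simpa [hfv'def, F, hε] using this
    · have heq' : (z s).2 = θs := by simpa [hfvdef] using heq
      have := ineqB hν0 hν hθ1 hθ2 c0 heq'
      simpa [hfv'def, F, hε] using this
    · have heq' : -(z s).2 = θs := by simpa [hfvdef] using heq
      have := ineqC hν0 hν hθ1 hθ2 c0 heq'
      simpa [hfv'def, F, hε] using this
  -- phase 1: moving barrier on [0, T₁]
  have hphase1 : ∀ i, fv i T₁ ≤ ν := by
    have hbar := barrier fv fv' (fun τ => 1/12 - ε*τ) (fun _ => -ε)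
      (a := 0) (b := T₁)
      (fun i s hs => hder i s hs.1)
      (fun s hs => by
        have h := ((hasDerivAt_id s).const_mul ε).const_sub (1/12 : ℝ)
        simpa using h)
      (by
        intro i
        have hmem := (mem_B_iff (by norm_num : (0:ℝ) ≤ 1/12)).mp hz0
        fin_cases i
        · simpa [hfvdef] using hmem.1
        · simpa [hfvdef] using hmem.2.1
        · simpa [hfvdef] using hmem.2.2)
      (by
        intro s hs hall i heq
        have hθ1 : ν ≤ 1/12 - ε*s := by
          have : ε * s ≤ ε * T₁ := mul_le_mul_of_nonneg_left hs.2 hεpos.le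
          linarith [hεT₁]
        have hθ2 : (1:ℝ)/12 - ε*s ≤ 1/12 := by nlinarith [mul_nonneg hεpos.le hs.1]
        exact hH s (1/12 - ε*s) hθ1 hθ2 hall i heq)
    intro i
    have := hbar T₁ ⟨hT₁0, le_refl T₁⟩ i
    calc fv i T₁ ≤ 1/12 - ε*T₁ := this
      _ = ν := by linarith [hεT₁]
  -- phase 2: static barrier at level ν on [T₁, t]
  have hphase2 : ∀ i, fv i t ≤ ν := by
    have hbar := barrier fv fv' (fun _ => ν) (fun _ => 0)
      (a := T₁) (b := t)
      (fun i s hs => hder i s (le_trans hT₁0 hs.1))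
      (fun s _ => hasDerivAt_const s ν)
      hphase1
      (by
        intro s hs hall i heq
        have := hH s ν (le_refl ν) hν hall i heq
        show fv' i s < 0
        linarith)
    exact fun i => hbar t ⟨htT₁, le_refl t⟩ i
  have c0 : (z t).1^2/2 ≤ ν := by simpa [hfvdef] using hphase2 0
  have c1 : (z t).2 ≤ ν := by simpa [hfvdef] using hphase2 1
  have c2 : -(z t).2 ≤ ν := by simpa [hfvdef] using hphase2 2
  exact (mem_B_iff hν0.le).mpr ⟨c0, c1, c2⟩
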